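/- arXiv:1610.05445 — 4 statements merged into one kernel-verified Lean document; each statement's English description precedes it below -/
import Mathlib

section
/- Let h : ℕ → ℕ be a strictly increasing sequence of positive naturals satisfying the apartness condition: for all i < j, μ(h i) < λ(h j), where λ is the 2-adic valuation and μ(n) = ⌊log₂ n⌋. Then for all i ≤ j, λ(h i + h (i+1) + ... + h j) = λ(h i) and μ(h i + ... + h j) = μ(h j). -/
/-- λ(n): the 2-adic valuation of n (least exponent in binary expansion). -/
def lam (n : ℕ) : ℕ := padicValNat 2 n

/-- μ(n): ⌊log₂ n⌋ (greatest exponent in binary expansion). -/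
def mu (n : ℕ) : ℕ := Nat.log 2 n

/-- Apartness condition for a sequence. -/
def Apart (h : ℕ → ℕ) : Prop := ∀ i j, i < j → mu (h i) < lam (h j)

/-- Sum of adjacent elements h i + h (i+1) + ... + h j. -/
def adjSum (h : ℕ → ℕ) (i j : ℕ) : ℕ := ∑ t ∈ Finset.Icc i j, h t

lemma key (a b : ℕ) (ha : 0 < a) (hb : 0 < b) (hab : mu a < lam b) :
    lam (a + b) = lam a ∧ mu (a + b) = mu b := by
  haveI : Fact (Nat.Prime 2) := ⟨Nat.prime_two⟩
  have hda : 2 ^ lam a ∣ a := pow_padicValNat_dvd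
  have hdb : 2 ^ lam b ∣ b := pow_padicValNat_dvd
  have hla : lam a ≤ mu a :=
    (Nat.le_log_iff_pow_le one_lt_two ha.ne').mpr (Nat.le_of_dvd ha hda)
  have hlb : lam b ≤ mu b :=
    (Nat.le_log_iff_pow_le one_lt_two hb.ne').mpr (Nat.le_of_dvd hb hdb)
  have hds : 2 ^ (lam a + 1) ∣ b := dvd_trans (pow_dvd_pow 2 (by omega)) hdb
  have habpos : 0 < a + b := by omega
  constructor
  · have h1 : 2 ^ lam a ∣ a + b := Dvd.dvd.add hda (dvd_trans (pow_dvd_pow 2 (by omega)) hdb)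
    have h2 : ¬ 2 ^ (lam a + 1) ∣ a + b := by
      intro hc
      have hda' : 2 ^ (lam a + 1) ∣ a := by
        have := Nat.dvd_sub hc hds
        simpa using this
      have := (padicValNat_dvd_iff_le (p := 2) ha.ne').mp hda'
      have : lam a + 1 ≤ lam a := this
      omega
    have v1 : lam a ≤ lam (a + b) := (padicValNat_dvd_iff_le habpos.ne').mp h1
    have v2 : ¬ (lam a + 1 ≤ lam (a + b)) := fun hc =>
      h2 ((padicValNat_dvd_iff_le habpos.ne').mpr hc)
    omega
  · have hb1 : 2 ^ mu b ≤ b := Nat.pow_log_le_self 2 hb.ne'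
    have hb2 : b < 2 ^ (mu b + 1) := Nat.lt_pow_succ_log_self one_lt_two b
    have ha2 : a < 2 ^ (lam b) := by
      calc a < 2 ^ (mu a + 1) := Nat.lt_pow_succ_log_self one_lt_two a
        _ ≤ 2 ^ lam b := Nat.pow_le_pow_right (by norm_num) (by omega)
    have hbig : 2 ^ lam b ∣ 2 ^ (mu b + 1) - b := Nat.dvd_sub
      (dvd_trans (pow_dvd_pow 2 (by omega)) dvd_rfl) hdb
    have : 2 ^ lam b ≤ 2 ^ (mu b + 1) - b := Nat.le_of_dvd (by omega) hbig
    have hub : a + b < 2 ^ (mu b + 1) := by omega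
    have hlbd : 2 ^ mu b ≤ a + b := by omega
    exact Nat.log_eq_of_pow_le_of_lt_pow hlbd hub

theorem lam_mu_adjSum (h : ℕ → ℕ) (hmono : StrictMono h) (hpos : ∀ i, 0 < h i)
    (hap : Apart h) :
    ∀ i j, i ≤ j → lam (adjSum h i j) = lam (h i) ∧ mu (adjSum h i j) = mu (h j) := by
  intro i j hij
  induction j with
  | zero =>
    have : i = 0 := Nat.le_zero.mp hij
    subst this
    simp [adjSum]
  | succ j ih =>
    rcases Nat.lt_or_ge i (j + 1) with hlt | hge
    · have hij' : i ≤ j := Nat.lt_succ_iff.mp hlt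
      have ⟨ihl, ihm⟩ := ih hij'
      have hsum : adjSum h i (j + 1) = adjSum h i j + h (j + 1) := by
        simpa [adjSum] using Finset.sum_Icc_succ_top (by omega : i ≤ j + 1) h
      have hspos : 0 < adjSum h i j := by
        apply Finset.sum_pos (fun t _ => hpos t)
        exact ⟨i, Finset.mem_Icc.mpr ⟨le_refl i, hij'⟩⟩
      have hk := key (adjSum h i j) (h (j + 1)) hspos (hpos (j + 1))
        (by rw [ihm]; exact hap j (j + 1) (by omega))
      rw [hsum]
      exact ⟨hk.1.trans ihl, hk.2⟩
    · have : i = j + 1 := by omega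
      subst this
      simp [adjSum]
end

section
/- Ramsey's theorem for pairs and 2 colors implies the Adjacent Hindman Theorem for 2 colors: for every coloring c : ℕ → Fin 2, there exists a strictly increasing sequence h : ℕ → ℕ of positive naturals satisfying the apartness condition (for all i < j, μ(h i) < λ(h j)) and a color d : Fin 2 such that for all i ≤ j, c(h i + h (i+1) + ... + h j) = d. -/
lemma pow_sub_factor {a b : ℕ} (hab : a < b) :
    2 ^ b - 2 ^ a = 2 ^ a * (2 ^ (b - a) - 1) := by
  have h1 : 2 ^ a * 2 ^ (b - a) = 2 ^ b := by
    rw [← pow_add]; congr 1; omega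
  rw [Nat.mul_sub, h1, mul_one]

lemma lam_pow_sub {a b : ℕ} (hab : a < b) : lam (2 ^ b - 2 ^ a) = a := by
  haveI : Fact (Nat.Prime 2) := ⟨Nat.prime_two⟩
  rw [lam, pow_sub_factor hab]
  have hdvd : (2:ℕ) ∣ 2 ^ (b - a) := dvd_pow_self 2 (by omega)
  have h1 : (2:ℕ) ≤ 2 ^ (b - a) := by
    calc (2:ℕ) = 2 ^ 1 := rfl
    _ ≤ 2 ^ (b - a) := Nat.pow_le_pow_right (by norm_num) (by omega)
  have hodd : ¬ (2:ℕ) ∣ (2 ^ (b - a) - 1) := by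
    obtain ⟨m, hm⟩ := hdvd
    omega
  have h0 : 2 ^ (b - a) - 1 ≠ 0 := by omega
  rw [padicValNat.mul (by positivity) h0, padicValNat.prime_pow a,
    padicValNat.eq_zero_of_not_dvd hodd]
  omega

lemma mu_pow_sub {a b : ℕ} (hab : a < b) : mu (2 ^ b - 2 ^ a) = b - 1 := by
  rw [mu]
  have h1 : 2 ^ a ≤ 2 ^ (b - 1) := Nat.pow_le_pow_right (by norm_num) (by omega)
  have h2 : 2 ^ (b - 1) + 2 ^ (b - 1) = 2 ^ b := by
    rw [← two_mul, ← pow_succ']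
    congr 1
    omega
  have h3 : (1:ℕ) ≤ 2 ^ a := Nat.one_le_two_pow
  apply Nat.log_eq_of_pow_le_of_lt_pow (by omega)
  have : b - 1 + 1 = b := by omega
  rw [this]
  omega

theorem rt22_implies_aht2
    (ramsey : ∀ f : ℕ → ℕ → Fin 2, ∃ J : Set ℕ, J.Infinite ∧
      ∃ d : Fin 2, ∀ x ∈ J, ∀ y ∈ J, x < y → f x y = d) :
    ∀ c : ℕ → Fin 2, ∃ h : ℕ → ℕ, StrictMono h ∧ (∀ i, 0 < h i) ∧ Apart h ∧
      ∃ d : Fin 2, ∀ i j, i ≤ j → c (adjSum h i j) = d := by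
  intro c
  obtain ⟨J, hJinf, d, hhom⟩ := ramsey (fun x y => c (2 ^ y - 2 ^ x))
  have hJinf' : (setOf (· ∈ J)).Infinite := hJinf
  set e : ℕ → ℕ := Nat.nth (· ∈ J) with he
  have hemem : ∀ n, e n ∈ J := fun n => Nat.nth_mem_of_infinite hJinf' n
  have hemono : StrictMono e := Nat.nth_strictMono hJinf'
  have hlt : ∀ n, e n < e (n + 1) := fun n => hemono (Nat.lt_succ_self n)
  have hpow : ∀ x y : ℕ, x ≤ y → (2:ℕ) ^ (e x) ≤ 2 ^ (e y) := fun x y hxy =>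
    Nat.pow_le_pow_right (by norm_num) (hemono.le_iff_le.mpr hxy)
  set h : ℕ → ℕ := fun n => 2 ^ (e (n + 1)) - 2 ^ (e n) with hh
  have hhn : ∀ n, h n = 2 ^ (e (n + 1)) - 2 ^ (e n) := fun _ => rfl
  have hpos : ∀ n, 0 < h n := by
    intro n
    rw [hhn]
    have := Nat.pow_lt_pow_right (a := 2) (by norm_num) (hlt n)
    omega
  have hsum : ∀ i j, i ≤ j → adjSum h i j = 2 ^ (e (j + 1)) - 2 ^ (e i) := by
    intro i j hij
    induction j with
    | zero =>
      interval_cases i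
      simp [adjSum, hhn]
    | succ j ih =>
      rcases Nat.eq_or_lt_of_le hij with rfl | hij'
      · simp [adjSum, hhn]
      · have hij2 : i ≤ j := by omega
        have hstep : adjSum h i (j + 1) = adjSum h i j + h (j + 1) := by
          rw [adjSum, adjSum, ← Finset.sum_Icc_succ_top (by omega)]
        rw [hstep, ih hij2, hhn (j + 1)]
        have h1 := hpow i (j + 1) (by omega)
        have h2 := hpow (j + 1) (j + 1 + 1) (by omega)
        have h3 : (1:ℕ) ≤ 2 ^ (e i) := Nat.one_le_two_pow
        omega
  refine ⟨h, ?_, hpos, ?_, d, ?_⟩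
  · -- StrictMono
    intro i j hij
    rw [hhn, hhn]
    have hA := hpow (j + 1) (j + 1) le_rfl
    have hB : 2 ^ (e j + 1) ≤ 2 ^ (e (j + 1)) :=
      Nat.pow_le_pow_right (by norm_num) (hlt j)
    have hB' : (2:ℕ) ^ (e j + 1) = 2 * 2 ^ (e j) := by rw [pow_succ]; ring
    have hC := hpow (i + 1) j (by omega)
    have hD : (1:ℕ) ≤ 2 ^ (e i) := Nat.one_le_two_pow
    have hE : (1:ℕ) ≤ 2 ^ (e j) := Nat.one_le_two_pow
    omega
  · -- Apart
    intro i j hij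
    rw [hhn, hhn, mu_pow_sub (hlt i), lam_pow_sub (hlt j)]
    have h1 : e (i + 1) ≤ e j := hemono.le_iff_le.mpr (by omega)
    have := hlt i
    omega
  · intro i j hij
    rw [hsum i j hij]
    exact hhom (e i) (hemem i) (e (j + 1)) (hemem (j + 1)) (hemono (by omega))
end

section
/- Given a coloring c : ℕ → Fin 2 and an infinite homogeneous set J = {j_1 < j_2 < ...} for the induced pair-coloring f(i,j) := c(2^{i+1} + 2^{i+2} + ... + 2^j), the set H = {2^{j_1+1} + ... + 2^{j_2}, 2^{j_2+1} + ... + 2^{j_3}, ...} satisfies: every finite sum of adjacent elements of H has the same c-color, and H satisfies the apartness condition. -/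
lemma icc_eq_ioc (a b : ℕ) : Finset.Icc (a+1) b = Finset.Ioc a b := by
  ext x; simp [Nat.succ_le_iff]

lemma sum_pow2_Ioc (a b : ℕ) : ∑ t ∈ Finset.Ioc a b, 2^t = 2^(b+1) - 2^(a+1) := by
  rcases le_or_gt a b with hab | hab
  · induction b, hab using Nat.le_induction with
    | base => simp
    | succ n hn ih =>
      rw [Finset.sum_Ioc_succ_top (by omega : a ≤ n), ih]
      have h1 : 2^(a+1) ≤ 2^(n+1) := Nat.pow_le_pow_right (by norm_num) (by omega)
      have h2 : 2^(n+1+1) = 2 * 2^(n+1) := by ring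
      omega
  · rw [Finset.Ioc_eq_empty (by omega)]
    have : 2^(b+1) ≤ 2^(a+1) := Nat.pow_le_pow_right (by norm_num) (by omega)
    simp
    omega

lemma factored (a b : ℕ) (hab : a ≤ b) :
    2^(b+1) - 2^(a+1) = 2^(a+1) * (2^(b-a) - 1) := by
  have : 2^(b+1) = 2^(a+1) * 2^(b-a) := by
    rw [← pow_add]; congr 1; omega
  rw [this, Nat.mul_sub_one]

lemma lam_val (a b : ℕ) (hab : a < b) : lam (2^(b+1) - 2^(a+1)) = a + 1 := by
  rw [factored a b hab.le, lam]
  have hge : 2 ≤ 2^(b-a) := Nat.one_lt_two_pow (by omega)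
  have hodd : ¬ (2 ∣ (2^(b-a) - 1)) := by
    have : 2 ∣ 2^(b-a) := dvd_pow_self 2 (by omega)
    omega
  have hne : (2^(b-a) - 1) ≠ 0 := by omega
  haveI : Fact (Nat.Prime 2) := ⟨Nat.prime_two⟩
  rw [padicValNat.mul (by positivity) hne, padicValNat.prime_pow,
    padicValNat.eq_zero_of_not_dvd hodd]

lemma mu_val (a b : ℕ) (hab : a < b) : mu (2^(b+1) - 2^(a+1)) = b := by
  have h1 : 2^(a+1) ≤ 2^b := Nat.pow_le_pow_right (by norm_num) (by omega)
  have h2 : 2^(b+1) = 2 * 2^b := by ring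
  have h0 : (1:ℕ) ≤ 2^a := Nat.one_le_two_pow
  exact Nat.log_eq_of_pow_le_of_lt_pow (by omega) (by omega)

theorem homogeneous_gives_aht_witness (c : ℕ → Fin 2) (e : ℕ → ℕ) (d : Fin 2)
    (hmono : StrictMono e)
    (hhom : ∀ p q, p < q → c (∑ t ∈ Finset.Icc (e p + 1) (e q), 2 ^ t) = d) :
    let h : ℕ → ℕ := fun n => ∑ t ∈ Finset.Icc (e n + 1) (e (n + 1)), 2 ^ t
    Apart h ∧ StrictMono h ∧ ∀ i j, i ≤ j → c (adjSum h i j) = d := by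
  intro h
  have hval : ∀ n, h n = 2^(e (n+1) + 1) - 2^(e n + 1) := by
    intro n; simp only [h, icc_eq_ioc, sum_pow2_Ioc]
  have hlt : ∀ n, e n < e (n+1) := fun n => hmono (by omega)
  refine ⟨?_, ?_, ?_⟩
  · intro i j hij
    rw [hval i, hval j, mu_val _ _ (hlt i), lam_val _ _ (hlt j)]
    have : e (i+1) ≤ e j := hmono.le_iff_le.mpr (by omega)
    omega
  · apply strictMono_nat_of_lt_succ
    intro n
    rw [hval n, hval (n+1)]
    have h1 := hlt n
    have h2 := hlt (n+1)
    have p2 : 2^(e n + 1) < 2^(e (n+1) + 1) :=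
      Nat.pow_lt_pow_right (by norm_num) (by omega)
    have p4 : 2^(e (n+1) + 1 + 1) ≤ 2^(e (n+1+1) + 1) :=
      Nat.pow_le_pow_right (by norm_num) (by omega)
    have pe : 2^(e (n+1) + 1 + 1) = 2 * 2^(e (n+1) + 1) := by ring
    have p0 : (1:ℕ) ≤ 2^(e n + 1) := Nat.one_le_two_pow
    omega
  · intro i j hij
    have key : adjSum h i j = ∑ t ∈ Finset.Icc (e i + 1) (e (j+1)), 2 ^ t := by
      rw [adjSum]
      induction j, hij using Nat.le_induction with
      | base => simp [h]
      | succ n hn ih =>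
        rw [Finset.sum_Icc_succ_top (by omega : i ≤ n + 1), ih]
        simp only [h, icc_eq_ioc]
        have hmle : e i ≤ e (n+1) := hmono.le_iff_le.mpr (by omega)
        exact Finset.sum_Ioc_consecutive _ hmle (hlt (n+1)).le
    rw [key]
    exact hhom i (j+1) (by omega)
end

section
/- The Adjacent Hindman Theorem for 2 colors implies the Increasing Polarized Ramsey Theorem for pairs and 2 colors: if for every g : ℕ → Fin 2 there exists an apart strictly increasing sequence h with all adjacent sums monochromatic, then for every f : ℕ → ℕ → Fin 2 there exist infinite sets H₁, H₂ ⊆ ℕ and a color d such that f x₁ x₂ = d for all x₁ ∈ H₁, x₂ ∈ H₂ with x₁ < x₂. -/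
lemma lam_eq (n v : ℕ) (hn : n ≠ 0) (h1 : 2^v ∣ n) (h2 : ¬ 2^(v+1) ∣ n) : lam n = v := by
  have a := (Nat.Prime.pow_dvd_iff_le_factorization Nat.prime_two hn).mp h1
  have b : ¬ v+1 ≤ n.factorization 2 := fun h => h2 ((Nat.Prime.pow_dvd_iff_le_factorization Nat.prime_two hn).mpr h)
  rw [Nat.factorization_def n Nat.prime_two] at a b
  unfold lam; omega

lemma pow_lam_dvd (n : ℕ) : 2 ^ lam n ∣ n := pow_padicValNat_dvd

lemma not_pow_lam_succ_dvd (n : ℕ) (hn : n ≠ 0) : ¬ 2 ^ (lam n + 1) ∣ n := by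
  haveI : Fact (Nat.Prime 2) := ⟨Nat.prime_two⟩
  exact pow_succ_padicValNat_not_dvd hn

lemma lam_le_mu (n : ℕ) (hn : 0 < n) : lam n ≤ mu n := by
  have h1 : 2 ^ lam n ≤ n := Nat.le_of_dvd hn (pow_lam_dvd n)
  exact (Nat.le_log_iff_pow_le one_lt_two hn.ne').mpr h1

lemma mu_lt (n : ℕ) : n < 2 ^ (mu n + 1) := Nat.lt_pow_succ_log_self one_lt_two n

lemma mu_le (n : ℕ) (hn : 0 < n) : 2 ^ mu n ≤ n := Nat.pow_log_le_self 2 hn.ne'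

lemma lam_add (a b : ℕ) (ha : 0 < a) (hb : 0 < b) (hab : lam a < lam b) :
    lam (a + b) = lam a := by
  apply lam_eq _ _ (by omega)
  · exact Dvd.dvd.add (pow_lam_dvd a) ((pow_dvd_pow 2 hab.le).trans (pow_lam_dvd b))
  · intro hd
    have hb' : 2 ^ (lam a + 1) ∣ b := (pow_dvd_pow 2 hab).trans (pow_lam_dvd b)
    apply not_pow_lam_succ_dvd a ha.ne'
    have := Nat.dvd_sub hd hb'
    simpa using this

lemma mu_add (a b : ℕ) (hb : 0 < b) (hab : mu a < lam b) : mu (a + b) = mu b := by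
  have ha2 : a < 2 ^ lam b := lt_of_lt_of_le (mu_lt a) (Nat.pow_le_pow_right (by norm_num) hab)
  have hd1 : 2 ^ lam b ∣ b := pow_lam_dvd b
  have hd2 : 2 ^ lam b ∣ 2 ^ (mu b + 1) :=
    pow_dvd_pow 2 (by have := lam_le_mu b hb; omega)
  have hsub : 2 ^ lam b ∣ 2 ^ (mu b + 1) - b := Nat.dvd_sub hd2 hd1
  have hpos : 0 < 2 ^ (mu b + 1) - b := by have := mu_lt b; omega
  have hge : 2 ^ lam b ≤ 2 ^ (mu b + 1) - b := Nat.le_of_dvd hpos hsub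
  have hub : a + b < 2 ^ (mu b + 1) := by omega
  have hlb : 2 ^ mu b ≤ a + b := le_trans (mu_le b hb) (by omega)
  exact Nat.log_eq_of_pow_le_of_lt_pow hlb hub

lemma adjSum_spec (h : ℕ → ℕ) (hpos : ∀ i, 0 < h i) (hap : Apart h) (i : ℕ) :
    ∀ j, i ≤ j → 0 < adjSum h i j ∧ lam (adjSum h i j) = lam (h i) ∧
      mu (adjSum h i j) = mu (h j) := by
  intro j
  induction j with
  | zero => intro hij; interval_cases i; simp [adjSum, hpos 0]
  | succ j ih =>
    intro hij
    rcases Nat.lt_or_ge i (j+1) with hlt | hge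
    · have hij' : i ≤ j := by omega
      obtain ⟨hp, hl, hm⟩ := ih hij'
      have hsum : adjSum h i (j+1) = adjSum h i j + h (j+1) := by
        rw [adjSum, Finset.sum_Icc_succ_top hij]; rfl
      have hml : mu (adjSum h i j) < lam (h (j+1)) := hm ▸ hap j (j+1) (by omega)
      have hll : lam (adjSum h i j) < lam (h (j+1)) :=
        lt_of_le_of_lt (lam_le_mu _ hp) hml
      refine ⟨by rw [hsum]; positivity, ?_, ?_⟩
      · rw [hsum, lam_add _ _ hp (hpos _) hll, hl]
      · rw [hsum, mu_add _ _ (hpos _) hml]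
    · have : i = j + 1 := by omega
      subst this; simp [adjSum, hpos (j+1)]

theorem aht2_implies_ipt22
    (aht : ∀ g : ℕ → Fin 2, ∃ h : ℕ → ℕ, StrictMono h ∧ (∀ i, 0 < h i) ∧ Apart h ∧
      ∃ d : Fin 2, ∀ i j, i ≤ j → g (adjSum h i j) = d) :
    ∀ f : ℕ → ℕ → Fin 2, ∃ H₁ H₂ : Set ℕ, H₁.Infinite ∧ H₂.Infinite ∧
      ∃ d : Fin 2, ∀ x₁ ∈ H₁, ∀ x₂ ∈ H₂, x₁ < x₂ → f x₁ x₂ = d := by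
  intro f
  obtain ⟨h, hmono, hpos, hap, d, hd⟩ := aht (fun n => f (lam n) (mu n))
  have key : ∀ i j, i < j → mu (h i) < lam (h j) := hap
  have lmono : StrictMono (fun i => lam (h i)) := fun i j hij =>
    lt_of_le_of_lt (lam_le_mu _ (hpos i)) (key i j hij)
  have mmono : StrictMono (fun j => mu (h j)) := fun i j hij =>
    lt_of_lt_of_le (key i j hij) (lam_le_mu _ (hpos j))
  refine ⟨Set.range (fun i => lam (h i)), Set.range (fun j => mu (h j)),
    Set.infinite_range_of_injective lmono.injective,
    Set.infinite_range_of_injective mmono.injective, d, ?_⟩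
  rintro x₁ ⟨i, rfl⟩ x₂ ⟨j, rfl⟩ hlt
  have hij : i ≤ j := by
    by_contra hc
    have := key j i (by omega)
    have := lam_le_mu (h j) (hpos j)
    simp only at hlt
    omega
  obtain ⟨hp, hl, hm⟩ := adjSum_spec h hpos hap i j hij
  have := hd i j hij
  simp only at this ⊢
  rw [← hl, ← hm]
  exact this
end
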